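/- Let Q ∈ ℝ^{p×p} be symmetric positive definite, G_{0,ω} ∈ ℝ^{p×p}, μ ∈ ℝ, and G_{d_ω} = I_p + μ(I_p + G_{0,ω}). If 1 + μ + μ·λ_i(Q^{1/2} G_{0,ω} Q^{-1/2} + Q^{-1/2} G_{0,ω}ᵀ Q^{1/2})/2 > 0 for every eigenvalue index i, then Q G_{d_ω} + G_{d_ω}ᵀ Q ≻ 0 and G_{d_ω} is anti-Hurwitz (all eigenvalues of G_{d_ω} have positive real part). -/

import Mathlib

open Matrix

/-- A real matrix is anti-Hurwitz if all its (complex) eigenvalues have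
strictly positive real part. -/
def AntiHurwitz {p : ℕ} (G : Matrix (Fin p) (Fin p) ℝ) : Prop :=
  ∀ z ∈ spectrum ℂ (G.map (algebraMap ℝ ℂ)), 0 < z.re

/-- The positive semidefinite square root of a positive semidefinite matrix
(the definition `Matrix.PosSemidef.sqrt` of the older Mathlib, since removed). -/
noncomputable def Matrix.PosSemidef.sqrt {n 𝕜 : Type*} [Fintype n] [DecidableEq n] [RCLike 𝕜]
    [PartialOrder 𝕜] [StarOrderedRing 𝕜]
    {A : Matrix n n 𝕜} (hA : A.PosSemidef) : Matrix n n 𝕜 :=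
  hA.1.eigenvectorUnitary.1 * diagonal ((↑) ∘ (√·) ∘ hA.1.eigenvalues) *
  (star hA.1.eigenvectorUnitary : Matrix n n 𝕜)

lemma psd_sqrt_facts {n : Type*} [Fintype n] [DecidableEq n] {A : Matrix n n ℝ}
    (hA : A.PosSemidef) : hA.sqrt.PosSemidef ∧ hA.sqrt * hA.sqrt = A := by
  have hUs : (star hA.1.eigenvectorUnitary : Matrix n n ℝ) * hA.1.eigenvectorUnitary.1 = 1 :=
    Unitary.star_mul_self_of_mem hA.1.eigenvectorUnitary.2
  constructor
  · unfold Matrix.PosSemidef.sqrt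
    have hD : (diagonal ((RCLike.ofReal : ℝ → ℝ) ∘ (√·) ∘ hA.1.eigenvalues)).PosSemidef :=
      PosSemidef.diagonal fun i => by simp [Real.sqrt_nonneg]
    simpa only [Unitary.coe_star, star_eq_conjTranspose] using hD.mul_mul_conjTranspose_same hA.1.eigenvectorUnitary.1
  · unfold Matrix.PosSemidef.sqrt
    have hspec := hA.1.spectral_theorem
    simp only [Unitary.conjStarAlgAut_apply] at hspec
    conv_rhs => rw [hspec]
    have hDD : diagonal ((RCLike.ofReal : ℝ → ℝ) ∘ (√·) ∘ hA.1.eigenvalues)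
        * diagonal ((RCLike.ofReal : ℝ → ℝ) ∘ (√·) ∘ hA.1.eigenvalues)
        = diagonal (RCLike.ofReal ∘ hA.1.eigenvalues) := by
      rw [diagonal_mul_diagonal]
      congr 1
      funext i
      simp [Real.mul_self_sqrt (hA.eigenvalues_nonneg i)]
    calc _ = hA.1.eigenvectorUnitary.1 * diagonal ((RCLike.ofReal : ℝ → ℝ) ∘ (√·) ∘ hA.1.eigenvalues)
          * ((star hA.1.eigenvectorUnitary : Matrix n n ℝ) * hA.1.eigenvectorUnitary.1)
          * diagonal ((RCLike.ofReal : ℝ → ℝ) ∘ (√·) ∘ hA.1.eigenvalues)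
          * (star hA.1.eigenvectorUnitary : Matrix n n ℝ) := by
            simp only [Matrix.mul_assoc]
      _ = _ := by rw [hUs, Matrix.mul_one, Matrix.mul_assoc (hA.1.eigenvectorUnitary.1), hDD]

lemma posDef_conj_of_isUnit {n : Type*} [Fintype n] [DecidableEq n]
    {P B : Matrix n n ℝ} (hP : P.PosDef) (hB : IsUnit B) : (Bᴴ * P * B).PosDef := by
  refine PosDef.of_dotProduct_mulVec_pos (isHermitian_conjTranspose_mul_mul B hP.1) fun x hx => ?_
  have hinj : Function.Injective B.mulVec := Matrix.mulVec_injective_iff_isUnit.mpr hB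
  have hBx : B *ᵥ x ≠ 0 := fun h => hx (hinj (by simpa using h))
  simpa only [star_mulVec, dotProduct_mulVec, vecMul_vecMul] using hP.dotProduct_mulVec_pos hBx

lemma re_dot_map (p : ℕ) (A : Matrix (Fin p) (Fin p) ℝ) (v : Fin p → ℂ) :
    (star v ⬝ᵥ (A.map (algebraMap ℝ ℂ)) *ᵥ v).re =
      (fun i => (v i).re) ⬝ᵥ A *ᵥ (fun i => (v i).re)
        + (fun i => (v i).im) ⬝ᵥ A *ᵥ (fun i => (v i).im) := by
  simp only [dotProduct, mulVec, Pi.star_apply, map_apply, Finset.mul_sum,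
    Complex.re_sum, ← Finset.sum_add_distrib]
  refine Finset.sum_congr rfl fun i _ => Finset.sum_congr rfl fun j _ => ?_
  simp [Complex.mul_re, Complex.mul_im, RCLike.star_def, Complex.conj_re, Complex.conj_im]


lemma re_dot_pos {p : ℕ} {A : Matrix (Fin p) (Fin p) ℝ} (hA : A.PosDef) {v : Fin p → ℂ}
    (hv : v ≠ 0) : 0 < (star v ⬝ᵥ (A.map (algebraMap ℝ ℂ)) *ᵥ v).re := by
  rw [re_dot_map]
  set x : Fin p → ℝ := fun i => (v i).re with hxdef
  set y : Fin p → ℝ := fun i => (v i).im with hydef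
  have hxy : x ≠ 0 ∨ y ≠ 0 := by
    by_contra h
    push_neg at h
    apply hv
    funext i
    have hx := congrFun h.1 i
    have hy := congrFun h.2 i
    simp only [hxdef, hydef, Pi.zero_apply] at hx hy
    exact Complex.ext (by simpa using hx) (by simpa using hy)
  have hx2 : 0 ≤ x ⬝ᵥ A *ᵥ x := by simpa using hA.posSemidef.dotProduct_mulVec_nonneg x
  have hy2 : 0 ≤ y ⬝ᵥ A *ᵥ y := by simpa using hA.posSemidef.dotProduct_mulVec_nonneg y
  rcases hxy with h | h
  · have hp := hA.dotProduct_mulVec_pos h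
    simp only [star_trivial] at hp
    linarith
  · have hp := hA.dotProduct_mulVec_pos h
    simp only [star_trivial] at hp
    linarith


theorem stmt12 {p : ℕ} (Q G₀ω : Matrix (Fin p) (Fin p) ℝ) (hQ : Q.PosDef)
    (μ : ℝ) (Gdω : Matrix (Fin p) (Fin p) ℝ)
    (hGdω : Gdω = 1 + μ • ((1 : Matrix (Fin p) (Fin p) ℝ) + G₀ω))
    (sqrtQ : Matrix (Fin p) (Fin p) ℝ) (hsqrt : sqrtQ = hQ.posSemidef.sqrt)
    (M : Matrix (Fin p) (Fin p) ℝ)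
    (hM : M = sqrtQ * G₀ω * sqrtQ⁻¹ + sqrtQ⁻¹ * G₀ωᵀ * sqrtQ)
    (hMH : M.IsHermitian)
    (heig : ∀ i, 0 < 1 + μ + μ * hMH.eigenvalues i / 2) :
    (Q * Gdω + Gdωᵀ * Q).PosDef ∧ AntiHurwitz Gdω := by
  -- basic facts about S := sqrtQ
  have hSps : sqrtQ.PosSemidef := hsqrt ▸ (psd_sqrt_facts hQ.posSemidef).1
  have hSS : sqrtQ * sqrtQ = Q := hsqrt ▸ (psd_sqrt_facts hQ.posSemidef).2
  have hdetQ : Q.det ≠ 0 := ne_of_gt hQ.det_pos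
  have hSdet : sqrtQ.det ≠ 0 := by
    intro h
    apply hdetQ
    rw [← hSS, det_mul, h, mul_zero]
  have hSunit : IsUnit sqrtQ := (Matrix.isUnit_iff_isUnit_det _).mpr (isUnit_iff_ne_zero.mpr hSdet)
  have hinvS : sqrtQ⁻¹ * sqrtQ = 1 := nonsing_inv_mul _ (isUnit_iff_ne_zero.mpr hSdet)
  have hSinv : sqrtQ * sqrtQ⁻¹ = 1 := mul_nonsing_inv _ (isUnit_iff_ne_zero.mpr hSdet)
  have hSH : sqrtQᴴ = sqrtQ := hSps.1
  -- N
  set N : Matrix (Fin p) (Fin p) ℝ := (2 * (1 + μ)) • 1 + μ • M with hN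
  have hA : Q * Gdω + Gdωᵀ * Q = sqrtQ * N * sqrtQ := by
    have hSMS : sqrtQ * M * sqrtQ = Q * G₀ω + G₀ωᵀ * Q := by
      rw [hM]
      rw [Matrix.mul_add, Matrix.add_mul]
      congr 1
      · calc sqrtQ * (sqrtQ * G₀ω * sqrtQ⁻¹) * sqrtQ
            = (sqrtQ * sqrtQ) * G₀ω * (sqrtQ⁻¹ * sqrtQ) := by
              simp only [Matrix.mul_assoc]
          _ = Q * G₀ω := by rw [hSS, hinvS, Matrix.mul_one]
      · calc sqrtQ * (sqrtQ⁻¹ * G₀ωᵀ * sqrtQ) * sqrtQ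
            = (sqrtQ * sqrtQ⁻¹) * (G₀ωᵀ * (sqrtQ * sqrtQ)) := by
              simp only [Matrix.mul_assoc]
          _ = G₀ωᵀ * Q := by rw [hSS, hSinv, Matrix.one_mul]
    rw [hN]
    rw [Matrix.mul_add, Matrix.add_mul, Matrix.mul_smul, Matrix.smul_mul,
      Matrix.mul_smul, Matrix.smul_mul, Matrix.mul_one, hSS, hSMS, hGdω]
    rw [transpose_add, transpose_one, transpose_smul, transpose_add, transpose_one]
    simp only [Matrix.mul_add, Matrix.add_mul, Matrix.mul_one, Matrix.one_mul,
      Matrix.mul_smul, Matrix.smul_mul, smul_add]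
    module
  -- N is positive definite
  set U : Matrix (Fin p) (Fin p) ℝ := (hMH.eigenvectorUnitary : Matrix (Fin p) (Fin p) ℝ) with hUdef
  have hU1 : U * star U = 1 := Matrix.mem_unitaryGroup_iff.mp hMH.eigenvectorUnitary.2
  have hUs1 : star U * U = 1 := mul_eq_one_comm.mp hU1
  have hNeq : N = (star U)ᴴ * diagonal (fun i => 2 * (1 + μ) + μ * hMH.eigenvalues i) * star U := by
    rw [show (star U)ᴴ = U from star_star U]
    have hdiag : diagonal (fun i => 2 * (1 + μ) + μ * hMH.eigenvalues i)
        = (2 * (1 + μ)) • (1 : Matrix (Fin p) (Fin p) ℝ)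
          + μ • diagonal (RCLike.ofReal ∘ hMH.eigenvalues) := by
      ext i j
      rcases eq_or_ne i j with rfl | h
      · simp [diagonal_apply_eq, RCLike.ofReal_real_eq_id]
      · simp [diagonal_apply_ne _ h, Matrix.one_apply_ne h]
    have hspec := hMH.spectral_theorem
    simp only [Unitary.conjStarAlgAut_apply] at hspec
    rw [hdiag, hN, Matrix.mul_add, Matrix.add_mul, Matrix.mul_smul, Matrix.smul_mul,
      Matrix.mul_smul, Matrix.smul_mul, Matrix.mul_one, hU1, ← hspec]
  have hNpd : N.PosDef := by
    rw [hNeq]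
    refine posDef_conj_of_isUnit (posDef_diagonal_iff.mpr fun i => ?_)
      ⟨⟨star U, U, hUs1, hU1⟩, rfl⟩
    have := heig i
    linarith
  have hApd : (Q * Gdω + Gdωᵀ * Q).PosDef := by
    have h := posDef_conj_of_isUnit hNpd hSunit
    rwa [hSH, ← hA] at h
  refine ⟨hApd, fun z hz => ?_⟩
  -- anti-Hurwitz part
  set Gc : Matrix (Fin p) (Fin p) ℂ := Gdω.map (algebraMap ℝ ℂ) with hGc
  have hdet : ((algebraMap ℂ (Matrix (Fin p) (Fin p) ℂ)) z - Gc).det = 0 := by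
    by_contra h
    exact (spectrum.mem_iff.mp hz)
      ((Matrix.isUnit_iff_isUnit_det _).mpr (isUnit_iff_ne_zero.mpr h))
  obtain ⟨v, hv0, hv⟩ := Matrix.exists_mulVec_eq_zero_iff.mpr hdet
  have hGv : Gc *ᵥ v = z • v := by
    rw [Algebra.algebraMap_eq_smul_one, sub_mulVec, smul_mulVec, one_mulVec] at hv
    exact (sub_eq_zero.mp hv).symm
  set Qc : Matrix (Fin p) (Fin p) ℂ := Q.map (algebraMap ℝ ℂ) with hQc
  set q : ℂ := star v ⬝ᵥ Qc *ᵥ v with hq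
  have hGcH : Gcᴴ = Gcᵀ := by
    ext i j
    simp [hGc, conjTranspose_apply, Complex.conj_ofReal]
  have hmap : (Q * Gdω + Gdωᵀ * Q).map (algebraMap ℝ ℂ) = Qc * Gc + Gcᵀ * Qc := by
    rw [Matrix.map_add _ (fun a b => map_add (algebraMap ℝ ℂ) a b),
      Matrix.map_mul (f := algebraMap ℝ ℂ), Matrix.map_mul (f := algebraMap ℝ ℂ), transpose_map]
  have h1 : star v ⬝ᵥ (Qc * Gc) *ᵥ v = z * q := by
    rw [← mulVec_mulVec, hGv, mulVec_smul, dotProduct_smul, hq, smul_eq_mul]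
  have h2 : star v ⬝ᵥ (Gcᵀ * Qc) *ᵥ v = (starRingEnd ℂ) z * q := by
    calc star v ⬝ᵥ (Gcᵀ * Qc) *ᵥ v = (star v ᵥ* Gcᵀ) ⬝ᵥ (Qc *ᵥ v) := by
          rw [← mulVec_mulVec, dotProduct_mulVec]
      _ = star (Gc *ᵥ v) ⬝ᵥ (Qc *ᵥ v) := by rw [star_mulVec, hGcH]
      _ = (starRingEnd ℂ) z * q := by
          rw [hGv, star_smul, smul_dotProduct, hq, smul_eq_mul]
          rfl
  have hkey : (star v ⬝ᵥ ((Q * Gdω + Gdωᵀ * Q).map (algebraMap ℝ ℂ)) *ᵥ v).re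
      = 2 * z.re * q.re := by
    rw [hmap, add_mulVec, dotProduct_add, h1, h2, ← add_mul, Complex.add_conj,
      Complex.re_ofReal_mul]
  have hqpos : 0 < q.re := re_dot_pos hQ hv0
  have hApos : 0 < 2 * z.re * q.re := hkey ▸ re_dot_pos hApd hv0
  nlinarith
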